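/- Let V be the closed convex hull of f(𝔖), let ε > 0, and suppose V^ε = A ∪ B ∪ C ∪ Z where the sets A, B, C are pairwise disjoint. Suppose that the set B ∪ C ∪ Z is invariant and that A and C are escape sets. If there exist a convex set W ⊆ V^ε and δ > 0 such that f(B ∪ C) ⊆ W and W^δ ∩ (B \ Z) = ∅, then the set Z is absorbing. -/

import Mathlib

/- Dynamical systems generated by memory-strategy profiles (Section 3 of the paper).
   `S` plays the role of 𝔖 ⊆ ℝ^N (a nonempty bounded convex set, in the paper the
   convex hull of the vector payoffs), and `f : E N → E N` plays the role of the
   map `f^s = u ∘ s` induced by a memory-strategy profile `s` (so `f` maps `S` to `S`). -/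

/-- Euclidean space ℝ^N. -/
abbrev E (N : ℕ) := EuclideanSpace ℝ (Fin N)

/-- `x` is a trajectory of the dynamical system induced by `f`, starting at stage
`t₀ ≥ 1` from an initial point `x t₀ ∈ S`: it is a sequence in `S` with
x̄_{t+1} = (t·x̄_t + f(x̄_t))/(t+1) for all t ≥ t₀. -/
def IsTraj {N : ℕ} (S : Set (E N)) (f : E N → E N) (t₀ : ℕ) (x : ℕ → E N) : Prop :=
  1 ≤ t₀ ∧ (∀ t : ℕ, t₀ ≤ t → x t ∈ S) ∧
    ∀ t : ℕ, t₀ ≤ t → x (t + 1) = ((t : ℝ) + 1)⁻¹ • ((t : ℝ) • x t + f (x t))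

/-- A set `Z` is invariant for the dynamical system induced by `f`:
there is `t_Z ≥ 1` such that for every `x ∈ Z` and every `t ≥ t_Z`,
(t·x + f(x))/(t+1) ∈ Z. -/
def Invariant {N : ℕ} (f : E N → E N) (Z : Set (E N)) : Prop :=
  ∃ tZ : ℕ, 1 ≤ tZ ∧ ∀ x ∈ Z, ∀ t : ℕ, tZ ≤ t →
    ((t : ℝ) + 1)⁻¹ • ((t : ℝ) • x + f x) ∈ Z

/-- A set `Z` is an escape set: along every trajectory, for every `τ ≥ t₀` there is
`t > τ` with `x t ∉ Z`. -/
def EscapeSet {N : ℕ} (S : Set (E N)) (f : E N → E N) (Z : Set (E N)) : Prop :=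
  ∀ (t₀ : ℕ) (x : ℕ → E N), IsTraj S f t₀ x →
    ∀ τ : ℕ, t₀ ≤ τ → ∃ t : ℕ, τ < t ∧ x t ∉ Z

/-- A set `Z` is absorbing: along every trajectory, for every `τ ≥ t₀` there is
`t > τ` with `x t ∈ Z`. -/
def AbsorbingSet {N : ℕ} (S : Set (E N)) (f : E N → E N) (Z : Set (E N)) : Prop :=
  ∀ (t₀ : ℕ) (x : ℕ → E N), IsTraj S f t₀ x →
    ∀ τ : ℕ, t₀ ≤ τ → ∃ t : ℕ, τ < t ∧ x t ∈ Z

open Filter Metric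

/-- Averaging lemma -/
lemma traj_approx {N : ℕ} (f : E N → E N) (x : ℕ → E N) (K : Set (E N)) (hK : Convex ℝ K)
    (a : ℕ)
    (hrec : ∀ t : ℕ, a ≤ t → x (t + 1) = ((t : ℝ) + 1)⁻¹ • ((t : ℝ) • x t + f (x t)))
    (hfK : ∀ t : ℕ, a ≤ t → f (x t) ∈ K)
    (D : ℝ) (hD : ‖x a - f (x a)‖ ≤ D) :
    ∀ s : ℕ, a ≤ s → ∃ k ∈ K, ‖x s - k‖ * s ≤ a * D := by
  intro s hs
  induction s, hs using Nat.le_induction with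
  | base =>
    refine ⟨f (x a), hfK a le_rfl, ?_⟩
    have := Nat.cast_nonneg (α := ℝ) a
    nlinarith [norm_nonneg (x a - f (x a))]
  | succ s hs ih =>
    obtain ⟨k, hkK, hk⟩ := ih
    have hs1 : (0:ℝ) < (s:ℝ) + 1 := by positivity
    have hmem : ((s:ℝ)+1)⁻¹ • ((s:ℝ) • k + f (x s)) ∈ K := by
      have h := hK hkK (hfK s hs) (a := (s:ℝ)/((s:ℝ)+1)) (b := 1/((s:ℝ)+1))
        (by positivity) (by positivity) (by field_simp)
      convert h using 1
      match_scalars <;> field_simp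
    refine ⟨_, hmem, ?_⟩
    have heq : x (s+1) - ((s:ℝ)+1)⁻¹ • ((s:ℝ) • k + f (x s))
        = ((s:ℝ)+1)⁻¹ • ((s:ℝ) • (x s - k)) := by
      rw [hrec s hs]; module
    rw [heq, norm_smul, norm_smul, Real.norm_eq_abs, Real.norm_eq_abs,
      abs_of_pos (inv_pos.2 hs1), abs_of_nonneg (Nat.cast_nonneg s)]
    push_cast
    have h2 : ((s:ℝ)+1)⁻¹ * ((s:ℝ) * ‖x s - k‖) * ((s:ℝ)+1) = ‖x s - k‖ * s := by
      field_simp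
    rw [h2]
    exact_mod_cast hk


/-- Lemma 3.4: let `V` be the closed convex hull of `f(S)`, `ε > 0` and suppose
`V^ε = A ∪ B ∪ C ∪ Z` with `A, B, C` pairwise disjoint, `B ∪ C ∪ Z` invariant and
`A, C` escape sets. If there are a convex set `W ⊆ V^ε` and `δ > 0` with
`f(B ∪ C) ⊆ W` and `W^δ ∩ (B \ Z) = ∅`, then `Z` is absorbing. -/
theorem stmt7 {N : ℕ} (S : Set (E N)) (hSconv : Convex ℝ S)
    (hSbdd : Bornology.IsBounded S) (hSne : S.Nonempty)
    (f : E N → E N) (hf : Set.MapsTo f S S)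
    (ε : ℝ) (hε : 0 < ε)
    (A B C Z : Set (E N))
    (hV : cthickening ε (closure (convexHull ℝ (f '' S))) = A ∪ B ∪ C ∪ Z)
    (hAB : Disjoint A B) (hAC : Disjoint A C) (hBC : Disjoint B C)
    (hInv : Invariant f (B ∪ C ∪ Z))
    (hA : EscapeSet S f A) (hC : EscapeSet S f C)
    (W : Set (E N)) (hWconv : Convex ℝ W)
    (hWV : W ⊆ cthickening ε (closure (convexHull ℝ (f '' S))))
    (δ : ℝ) (hδ : 0 < δ)
    (hfW : f '' (B ∪ C) ⊆ W)
    (hWδ : cthickening δ W ∩ (B \ Z) = ∅) :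
    AbsorbingSet S f Z := by
  intro t₀ x htraj τ hτ
  by_contra hcon
  push_neg at hcon
  have ht₀ := htraj.1
  have hxS := htraj.2.1
  have hrec := htraj.2.2
  obtain ⟨tZ, htZ1, hInvZ⟩ := hInv
  -- bound on S
  obtain ⟨R, hR⟩ := hSbdd.subset_closedBall 0
  have hnorm : ∀ t : ℕ, t₀ ≤ t → ‖x t - f (x t)‖ ≤ 2 * R := by
    intro t ht
    have h1 : ‖x t‖ ≤ R := mem_closedBall_zero_iff.1 (hR (hxS t ht))
    have h2 : ‖f (x t)‖ ≤ R := mem_closedBall_zero_iff.1 (hR (hf (hxS t ht)))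
    calc ‖x t - f (x t)‖ ≤ ‖x t‖ + ‖f (x t)‖ := norm_sub_le _ _
      _ ≤ 2 * R := by linarith
  have hR0 : 0 ≤ R := by
    obtain ⟨p, hp⟩ := hSne
    exact (norm_nonneg p).trans (mem_closedBall_zero_iff.1 (hR hp))
  set V := closure (convexHull ℝ (f '' S)) with hVdef
  have hVconv : Convex ℝ V := (convex_convexHull ℝ _).closure
  have hfV : ∀ t : ℕ, t₀ ≤ t → f (x t) ∈ V := fun t ht =>
    subset_closure (subset_convexHull ℝ _ (Set.mem_image_of_mem f (hxS t ht)))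
  have happroxV := traj_approx f x V hVconv t₀ hrec hfV (2 * R) (hnorm t₀ le_rfl)
  obtain ⟨n₁, hn₁⟩ := exists_nat_ge ((t₀ : ℝ) * (2 * R) / ε)
  set T := max (max n₁ tZ) (max (τ + 1) t₀) with hTdef
  have hTt₀ : t₀ ≤ T := le_max_of_le_right (le_max_right _ _)
  have hTτ : τ + 1 ≤ T := le_max_of_le_right (le_max_left _ _)
  have hTn₁ : n₁ ≤ T := le_max_of_le_left (le_max_left _ _)
  have hTtZ : tZ ≤ T := le_max_of_le_left (le_max_right _ _)
  -- a generic "eventually within η of K" computation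
  have key : ∀ (a n : ℕ) (η : ℝ), 0 < η → ((a : ℝ) * (2 * R) / η ≤ n) →
      ∀ (K : Set (E N)) (k : E N), k ∈ K → ∀ s : ℕ, 1 ≤ s → n ≤ s →
      ‖x s - k‖ * s ≤ a * (2 * R) → x s ∈ cthickening η K := by
    intro a n η hη hn K k hk s hs1 hns hb
    have hsp : (0:ℝ) < s := by exact_mod_cast hs1
    have h1 : (a : ℝ) * (2 * R) ≤ n * η := by
      rw [div_le_iff₀ hη] at hn; linarith
    have h2 : (n : ℝ) ≤ s := by exact_mod_cast hns
    have h3 : ‖x s - k‖ ≤ η := by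
      rw [← mul_le_mul_iff_of_pos_right hsp]
      calc ‖x s - k‖ * s ≤ (a : ℝ) * (2 * R) := hb
        _ ≤ n * η := h1
        _ ≤ η * s := by nlinarith
    exact mem_cthickening_of_dist_le (x s) k η K hk (by rwa [dist_eq_norm])
  have hmemV : ∀ s : ℕ, T ≤ s → x s ∈ A ∪ B ∪ C ∪ Z := by
    intro s hs
    have hst₀ : t₀ ≤ s := hTt₀.trans hs
    obtain ⟨k, hkV, hk⟩ := happroxV s hst₀
    rw [← hV]
    exact key t₀ n₁ ε hε hn₁ V k hkV s (ht₀.trans hst₀) (hTn₁.trans hs) hk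
  have hnotZ : ∀ s : ℕ, T ≤ s → x s ∉ Z := fun s hs =>
    hcon s (lt_of_lt_of_le (Nat.lt_succ_self τ) (hTτ.trans hs))
  -- invariance step
  have hstep : ∀ s : ℕ, T ≤ s → x s ∈ B ∪ C → x (s + 1) ∈ B ∪ C := by
    intro s hs hmem
    have h := hInvZ (x s) (Or.inl hmem) s (hTtZ.trans hs)
    rw [← hrec s (hTt₀.trans hs)] at h
    rcases h with h | h
    · exact h
    · exact absurd h (hnotZ (s + 1) (hs.trans (Nat.le_succ s)))
  -- escape from A
  obtain ⟨t₃, ht₃T, ht₃A⟩ := hA t₀ x htraj T hTt₀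
  have ht₃T' : T ≤ t₃ := ht₃T.le
  have ht₃BC : x t₃ ∈ B ∪ C := by
    rcases hmemV t₃ ht₃T' with ((h | h) | h) | h
    · exact absurd h ht₃A
    · exact Or.inl h
    · exact Or.inr h
    · exact absurd h (hnotZ t₃ ht₃T')
  have hBCall : ∀ s : ℕ, t₃ ≤ s → x s ∈ B ∪ C := by
    intro s hs
    induction s, hs using Nat.le_induction with
    | base => exact ht₃BC
    | succ s hs ih => exact hstep s (ht₃T'.trans hs) ih
  have hfWall : ∀ s : ℕ, t₃ ≤ s → f (x s) ∈ W := fun s hs =>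
    hfW (Set.mem_image_of_mem f (hBCall s hs))
  have ht₃1 : t₀ ≤ t₃ := hTt₀.trans ht₃T'
  have happroxW := traj_approx f x W hWconv t₃
    (fun t ht => hrec t (ht₃1.trans ht)) hfWall (2 * R) (hnorm t₃ ht₃1)
  obtain ⟨n₂, hn₂⟩ := exists_nat_ge ((t₃ : ℝ) * (2 * R) / δ)
  set T₂ := max n₂ t₃ with hT₂def
  have hCall : ∀ s : ℕ, T₂ ≤ s → x s ∈ C := by
    intro s hs
    have hst₃ : t₃ ≤ s := (le_max_right _ _).trans hs
    obtain ⟨w, hwW, hw⟩ := happroxW s hst₃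
    have hmemW : x s ∈ cthickening δ W :=
      key t₃ n₂ δ hδ hn₂ W w hwW s (ht₀.trans (ht₃1.trans hst₃))
        ((le_max_left _ _).trans hs) hw
    have hnB : x s ∉ B := by
      intro hB
      have : x s ∈ cthickening δ W ∩ (B \ Z) :=
        ⟨hmemW, hB, hnotZ s (ht₃T'.trans hst₃)⟩
      rw [hWδ] at this
      exact this
    rcases hBCall s hst₃ with h | h
    · exact absurd h hnB
    · exact h
  obtain ⟨t₅, ht₅T₂, ht₅C⟩ := hC t₀ x htraj T₂ (ht₃1.trans (le_max_right _ _))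
  exact ht₅C (hCall t₅ ht₅T₂.le)
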